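/- arXiv:1109.5144 — 5 statements merged into one kernel-verified Lean document; each statement's English description precedes it below -/
import Mathlib

section
/- Let σ_I, σ_S ∈ ℝ², T > 0, r ∈ ℝ, σ_I ≠ σ_S, and ξ ~ N(0, I₂). Define b by ln b = −(‖σ_S − σ_I‖²/2)T + z_{δ/2}‖σ_S − σ_I‖√T, where z_p is the upper p-quantile of N(0,1) and δ ∈ (0,1). Then e^{−rT} E[ exp((r − ‖σ_I‖²/2)T + √T σ_I·ξ) · 1{ exp((r − ‖σ_S‖²/2)T + √T σ_S·ξ) / exp((r − ‖σ_I‖²/2)T + √T σ_I·ξ) ≥ b } ] = δ/2. -/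
open MeasureTheory ProbabilityTheory

/-- The standard Gaussian measure `N(0, I_d)` on `EuclideanSpace ℝ (Fin d)`. -/
noncomputable def stdGaussian (d : ℕ) : Measure (EuclideanSpace ℝ (Fin d)) :=
  (Measure.pi fun _ : Fin d => gaussianReal 0 1).map
    (EuclideanSpace.equiv (Fin d) ℝ).symm

/-- The standard normal distribution function `F`. -/
noncomputable def stdNormalCDF (x : ℝ) : ℝ := ((gaussianReal 0 1) (Set.Iic x)).toReal

open Real
open scoped ENNReal NNReal RealInnerProductSpace

noncomputable abbrev γ1 : Measure ℝ := gaussianReal 0 1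

lemma pdf_shift (β x : ℝ) :
    Real.exp (β * x) * gaussianPDFReal 0 1 x = Real.exp (β^2/2) * gaussianPDFReal β 1 x := by
  simp only [gaussianPDFReal]
  push_cast
  rw [mul_comm, mul_assoc, ← Real.exp_add]
  rw [show rexp (β ^ 2 / 2) * ((√(2 * π * 1))⁻¹ * rexp (-(x - β) ^ 2 / (2 * 1)))
      = (√(2 * π * 1))⁻¹ * rexp (-(x - β) ^ 2 / (2 * 1) + β ^ 2 / 2) by
    rw [Real.exp_add]; ring]
  congr 1
  ring

lemma gamma1_eq : γ1 = volume.withDensity (fun x => ENNReal.ofReal (gaussianPDFReal 0 1 x)) :=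
  gaussianReal_of_var_ne_zero 0 one_ne_zero

lemma integral_gamma1 (f : ℝ → ℝ) :
    ∫ x, f x ∂γ1 = ∫ x, gaussianPDFReal 0 1 x * f x := by
  rw [gamma1_eq,
    show (fun x => ENNReal.ofReal (gaussianPDFReal 0 1 x))
      = fun x => ((Real.toNNReal (gaussianPDFReal 0 1 x) : ℝ≥0) : ℝ≥0∞) from rfl,
    integral_withDensity_eq_integral_smul ((measurable_gaussianPDFReal 0 1).real_toNNReal) f]
  congr 1; ext x
  simp [NNReal.smul_def, Real.coe_toNNReal _ (gaussianPDFReal_nonneg 0 1 x)]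

lemma int_exp (β : ℝ) : ∫ x, Real.exp (β*x) ∂γ1 = Real.exp (β^2/2) := by
  rw [integral_gamma1]
  have h : ∀ x, gaussianPDFReal 0 1 x * Real.exp (β*x)
      = Real.exp (β^2/2) * gaussianPDFReal β 1 x := fun x => by
    rw [mul_comm, pdf_shift]
  simp_rw [h]
  rw [MeasureTheory.integral_const_mul, integral_gaussianPDFReal_eq_one β one_ne_zero, mul_one]

lemma int_exp_ind (β t : ℝ) :
    ∫ x, Real.exp (β*x) * (Set.Ici t).indicator (fun _ => (1:ℝ)) x ∂γ1
      = Real.exp (β^2/2) * (γ1 (Set.Ici (t - β))).toReal := by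
  rw [integral_gamma1]
  have h1 : ∀ x, gaussianPDFReal 0 1 x * (Real.exp (β*x) * (Set.Ici t).indicator (fun _ => (1:ℝ)) x)
      = Real.exp (β^2/2) * (Set.Ici t).indicator (gaussianPDFReal β 1) x := by
    intro x
    by_cases hx : x ∈ Set.Ici t
    · simp only [Set.indicator_of_mem hx, mul_one]
      rw [mul_comm (gaussianPDFReal 0 1 x), pdf_shift]
    · simp [Set.indicator_of_notMem hx]
  simp_rw [h1]
  rw [MeasureTheory.integral_const_mul, integral_indicator measurableSet_Ici]
  congr 1
  have h2 : gaussianReal β 1 (Set.Ici t) = γ1 (Set.Ici (t - β)) := by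
    have hmap := gaussianReal_map_add_const (μ := 0) (v := 1) β
    rw [zero_add] at hmap
    rw [← hmap, Measure.map_apply (measurable_add_const β) measurableSet_Ici]
    congr 1
    ext x
    simp [sub_le_iff_le_add]
  rw [← h2, gaussianReal_apply_eq_integral β one_ne_zero, ENNReal.toReal_ofReal
    (integral_nonneg fun x => gaussianPDFReal_nonneg _ _ _)]

noncomputable def Φe : ℝ × ℝ ≃ᵐ EuclideanSpace ℝ (Fin 2) :=
  MeasurableEquiv.finTwoArrow.symm.trans (MeasurableEquiv.toLp 2 (Fin 2 → ℝ))

lemma Φe_apply_zero (p : ℝ × ℝ) : (Φe p) 0 = p.1 := rfl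
lemma Φe_apply_one (p : ℝ × ℝ) : (Φe p) 1 = p.2 := rfl
lemma Φe_symm_apply (x : EuclideanSpace ℝ (Fin 2)) : Φe.symm x = (x 0, x 1) := rfl

lemma stdGaussian_eq_map : stdGaussian 2 = (γ1.prod γ1).map Φe := by
  unfold _root_.stdGaussian
  rw [← (measurePreserving_finTwoArrow γ1).map_eq,
    Measure.map_map Φe.measurable MeasurableEquiv.finTwoArrow.measurable]
  congr 1
  funext x
  simp only [Function.comp_apply, Φe, MeasurableEquiv.trans_apply,
    MeasurableEquiv.symm_apply_apply]
  rfl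

noncomputable def dens2 : ℝ × ℝ → ℝ≥0∞ := fun p =>
  ENNReal.ofReal (gaussianPDFReal 0 1 p.1) * ENNReal.ofReal (gaussianPDFReal 0 1 p.2)

lemma dens2_meas : Measurable dens2 :=
  (((measurable_gaussianPDFReal 0 1).comp measurable_fst).ennreal_ofReal).mul
    (((measurable_gaussianPDFReal 0 1).comp measurable_snd).ennreal_ofReal)

lemma prod_gauss_eq : γ1.prod γ1 = ((volume : Measure ℝ).prod volume).withDensity dens2 := by
  refine (Measure.prod_eq (μν := ((volume : Measure ℝ).prod volume).withDensity dens2) (μ := γ1) (ν := γ1) fun s t hs ht => ?_)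
  rw [withDensity_apply _ (hs.prod ht), ← Measure.prod_restrict]
  simp only [dens2]
  rw [lintegral_prod_mul ((measurable_gaussianPDFReal 0 1).ennreal_ofReal.aemeasurable)
      ((measurable_gaussianPDFReal 0 1).ennreal_ofReal.aemeasurable)]
  rw [gaussianReal_apply 0 one_ne_zero s, gaussianReal_apply 0 one_ne_zero t]
  rfl

noncomputable def Dnorm : EuclideanSpace ℝ (Fin 2) → ℝ≥0∞ := fun x =>
  ENNReal.ofReal ((2*π)⁻¹ * rexp (-‖x‖^2/2))

lemma Dnorm_meas : Measurable Dnorm :=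
  ((continuous_const.mul ((continuous_norm.pow 2).neg.div_const 2).rexp).measurable).ennreal_ofReal

lemma prodpdf (a b : ℝ) : gaussianPDFReal 0 1 a * gaussianPDFReal 0 1 b
    = (2*π)⁻¹ * rexp (-(a^2+b^2)/2) := by
  simp only [gaussianPDFReal, NNReal.coe_one, mul_one, sub_zero]
  rw [show (√(2*π))⁻¹ * rexp (-a^2/2) * ((√(2*π))⁻¹ * rexp (-b^2/2))
      = ((√(2*π))⁻¹ * (√(2*π))⁻¹) * (rexp (-a^2/2) * rexp (-b^2/2)) by ring,
    ← Real.exp_add, ← mul_inv, Real.mul_self_sqrt (by positivity)]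
  congr 1
  ring

lemma map_withDensity_equiv {α β : Type*} [MeasurableSpace α] [MeasurableSpace β]
    (e : α ≃ᵐ β) (μ : Measure α) (f : α → ℝ≥0∞) (hf : Measurable f) :
    (μ.withDensity f).map e = (μ.map e).withDensity (f ∘ e.symm) := by
  ext s hs
  rw [Measure.map_apply e.measurable hs, withDensity_apply _ (e.measurable hs),
    withDensity_apply _ hs, Measure.restrict_map e.measurable hs,
    lintegral_map (hf.comp e.symm.measurable) e.measurable]
  refine lintegral_congr fun x => ?_
  simp

lemma norm_sq_E2 (x : EuclideanSpace ℝ (Fin 2)) : ‖x‖^2 = (x 0)^2 + (x 1)^2 := by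
  rw [EuclideanSpace.norm_eq, Real.sq_sqrt (by positivity)]
  simp [Fin.sum_univ_two]

lemma stdGaussian_density :
    stdGaussian 2 = (volume : Measure (EuclideanSpace ℝ (Fin 2))).withDensity Dnorm := by
  rw [stdGaussian_eq_map, prod_gauss_eq, map_withDensity_equiv Φe _ dens2 dens2_meas]
  have hvol : ((volume : Measure ℝ).prod volume).map Φe
      = (volume : Measure (EuclideanSpace ℝ (Fin 2))) := by
    rw [← Measure.volume_eq_prod]
    have h1 : MeasurePreserving Φe volume volume :=
      ((EuclideanSpace.volume_preserving_symm_measurableEquiv_toLp (Fin 2)).symm).comp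
        (MeasureTheory.volume_preserving_finTwoArrow ℝ).symm
    exact h1.map_eq
  rw [hvol]
  congr 1
  funext x
  simp only [Function.comp_apply, dens2, Φe_symm_apply, Dnorm]
  rw [← ENNReal.ofReal_mul (gaussianPDFReal_nonneg 0 1 _), prodpdf, norm_sq_E2]

lemma stdGaussian_map_isometry
    (R : EuclideanSpace ℝ (Fin 2) ≃ₗᵢ[ℝ] EuclideanSpace ℝ (Fin 2)) :
    (stdGaussian 2).map R = stdGaussian 2 := by
  have hcoe : (R : EuclideanSpace ℝ (Fin 2) → EuclideanSpace ℝ (Fin 2))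
      = R.toHomeomorph.toMeasurableEquiv := rfl
  rw [stdGaussian_density, hcoe,
    map_withDensity_equiv R.toHomeomorph.toMeasurableEquiv _ Dnorm Dnorm_meas]
  have hvol : (volume : Measure (EuclideanSpace ℝ (Fin 2))).map R.toHomeomorph.toMeasurableEquiv
      = volume := R.measurePreserving.map_eq
  rw [hvol]
  congr 1
  funext x
  simp only [Function.comp_apply, Dnorm]
  have : ‖R.toHomeomorph.toMeasurableEquiv.symm x‖ = ‖x‖ := R.symm.norm_map x
  rw [this]

set_option maxHeartbeats 1000000 in
theorem stmt4 (σI σS : EuclideanSpace ℝ (Fin 2)) (hne : σI ≠ σS)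
    (T r δ z b : ℝ) (hT : 0 < T) (hδ : δ ∈ Set.Ioo (0 : ℝ) 1)
    -- z = z_{δ/2}, the upper δ/2-quantile of N(0,1): P(N(0,1) ≥ z) = δ/2
    (hz : ((gaussianReal 0 1) (Set.Ici z)).toReal = δ / 2)
    (hb : 0 < b)
    (hlnb : Real.log b = -(‖σS - σI‖ ^ 2 / 2) * T + z * ‖σS - σI‖ * Real.sqrt T) :
    Real.exp (-r * T) *
      ∫ ξ, Real.exp ((r - ‖σI‖ ^ 2 / 2) * T + Real.sqrt T * (inner ℝ σI ξ : ℝ)) *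
        (if b ≤ Real.exp ((r - ‖σS‖ ^ 2 / 2) * T + Real.sqrt T * (inner ℝ σS ξ : ℝ)) /
                Real.exp ((r - ‖σI‖ ^ 2 / 2) * T + Real.sqrt T * (inner ℝ σI ξ : ℝ))
         then (1 : ℝ) else 0) ∂(stdGaussian 2)
      = δ / 2 := by
  have hsT : Real.sqrt T * Real.sqrt T = T := Real.mul_self_sqrt hT.le
  have hsTpos : 0 < Real.sqrt T := Real.sqrt_pos.mpr hT
  set v : EuclideanSpace ℝ (Fin 2) := σS - σI with hv_def
  have hv : v ≠ 0 := sub_ne_zero.mpr (Ne.symm hne)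
  set c : ℝ := ‖v‖ with hc_def
  have hc : 0 < c := norm_pos_iff.mpr hv
  set u : EuclideanSpace ℝ (Fin 2) := c⁻¹ • v with hu_def
  have hu : ‖u‖ = 1 := by
    rw [hu_def, norm_smul, norm_inv, Real.norm_eq_abs, abs_of_pos hc, ← hc_def]
    field_simp
  set e1 : EuclideanSpace ℝ (Fin 2) := EuclideanSpace.single (1 : Fin 2) (1:ℝ) with he1_def
  have he1 : ‖e1‖ = 1 := by rw [he1_def, EuclideanSpace.norm_single, norm_one]
  set R := Submodule.reflection (ℝ ∙ (e1 - u))ᗮ with hR_def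
  have hRe1 : R e1 = u := Submodule.reflection_sub (by rw [he1, hu])
  set y : EuclideanSpace ℝ (Fin 2) := R.symm σI with hy_def
  have hRy : R y = σI := R.apply_symm_apply σI
  have hinner_e1 : ∀ x : EuclideanSpace ℝ (Fin 2), ⟪e1, x⟫ = x 1 := fun x => by
    rw [he1_def, EuclideanSpace.inner_single_left]; simp
  have hIy : ∀ p : ℝ × ℝ, ⟪σI, R (Φe p)⟫ = y 0 * p.1 + y 1 * p.2 := fun p => by
    rw [← hRy, R.inner_map_map, PiLp.inner_apply]
    simp [Fin.sum_univ_two, Φe_apply_zero, Φe_apply_one]; ring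
  have hvu : v = c • u := by
    rw [hu_def, smul_smul, mul_inv_cancel₀ hc.ne', one_smul]
  have hvx : ∀ p : ℝ × ℝ, ⟪v, R (Φe p)⟫ = c * p.2 := fun p => by
    rw [hvu, real_inner_smul_left, ← hRe1, R.inner_map_map, hinner_e1, Φe_apply_one]
  have hnormI : ‖σI‖^2 = y 0^2 + y 1^2 := by
    have h := R.norm_map y
    rw [hRy] at h
    rw [h, norm_sq_E2]
  have hy1 : y 1 = c⁻¹ * ⟪σI, v⟫ := by
    rw [← hinner_e1 y, ← R.inner_map_map e1 y, hRe1, hRy, hu_def, real_inner_smul_left,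
      real_inner_comm]
  set β0 : ℝ := Real.sqrt T * y 0 with hβ0
  set β1 : ℝ := Real.sqrt T * y 1 with hβ1
  set t₀ : ℝ := (Real.log b + (‖σS‖^2 - ‖σI‖^2)/2*T)/(Real.sqrt T * c) with ht₀
  have hids : ‖σS‖^2 - ‖σI‖^2 = c^2 + 2*⟪σI, v⟫ := by
    have h1 : c^2 = ‖σS‖^2 - 2*⟪σS, σI⟫ + ‖σI‖^2 := by
      rw [hc_def, hv_def, norm_sub_sq_real]
    have h2 : ⟪σI, v⟫ = ⟪σS, σI⟫ - ‖σI‖^2 := by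
      rw [hv_def, inner_sub_right, real_inner_self_eq_norm_sq, real_inner_comm]
    rw [h1, h2]; ring
  -- pointwise identity
  set F : EuclideanSpace ℝ (Fin 2) → ℝ := fun ξ =>
    Real.exp ((r - ‖σI‖ ^ 2 / 2) * T + Real.sqrt T * ⟪σI, ξ⟫) *
      (if b ≤ Real.exp ((r - ‖σS‖ ^ 2 / 2) * T + Real.sqrt T * ⟪σS, ξ⟫) /
              Real.exp ((r - ‖σI‖ ^ 2 / 2) * T + Real.sqrt T * ⟪σI, ξ⟫)
       then (1 : ℝ) else 0) with hF
  have key : ∀ p : ℝ × ℝ, F (R (Φe p))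
      = (fun x : ℝ => Real.exp ((r - ‖σI‖ ^ 2 / 2) * T) * Real.exp (β0 * x)) p.1 *
        (fun x : ℝ => Real.exp (β1 * x) * (Set.Ici t₀).indicator (fun _ => (1:ℝ)) x) p.2 := by
    intro p
    simp only [hF]
    have hS : ⟪σS, R (Φe p)⟫ = ⟪σI, R (Φe p)⟫ + ⟪v, R (Φe p)⟫ := by
      rw [← inner_add_left, hv_def, add_sub_cancel]
    have hcond : (b ≤ Real.exp ((r - ‖σS‖ ^ 2 / 2) * T + Real.sqrt T * ⟪σS, R (Φe p)⟫) /
        Real.exp ((r - ‖σI‖ ^ 2 / 2) * T + Real.sqrt T * ⟪σI, R (Φe p)⟫)) ↔ t₀ ≤ p.2 := by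
      rw [← Real.exp_sub, ← Real.log_le_iff_le_exp hb, hS, hvx]
      have hXY : (r - ‖σS‖ ^ 2 / 2) * T + Real.sqrt T * (⟪σI, R (Φe p)⟫ + c * p.2)
          - ((r - ‖σI‖ ^ 2 / 2) * T + Real.sqrt T * ⟪σI, R (Φe p)⟫)
          = Real.sqrt T * c * p.2 - (‖σS‖^2 - ‖σI‖^2)/2*T := by ring
      rw [hXY, ht₀, div_le_iff₀ (by positivity), mul_comm p.2 (Real.sqrt T * c)]
      constructor <;> intro h <;> linarith
    by_cases hp : p.2 ∈ Set.Ici t₀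
    · rw [if_pos (hcond.mpr hp), Set.indicator_of_mem hp]
      simp only [hIy, mul_one]
      rw [← Real.exp_add, ← Real.exp_add]
      congr 1
      rw [hβ0, hβ1]; ring
    · rw [if_neg (fun h => hp (hcond.mp h)), Set.indicator_of_notMem hp]
      simp only [hIy]
      ring
  -- transport the integral
  have hmpR : MeasurePreserving (⇑R) (stdGaussian 2) (stdGaussian 2) :=
    ⟨R.continuous.measurable, stdGaussian_map_isometry R⟩
  have hembR : MeasurableEmbedding (⇑R) :=
    R.toHomeomorph.toMeasurableEquiv.measurableEmbedding
  have hmpΦ : MeasurePreserving (⇑Φe) (γ1.prod γ1) (stdGaussian 2) :=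
    ⟨Φe.measurable, stdGaussian_eq_map.symm⟩
  have step1 : ∫ ξ, F ξ ∂(stdGaussian 2) = ∫ p, F (R (Φe p)) ∂(γ1.prod γ1) := by
    rw [← hmpR.integral_comp hembR F]
    exact (hmpΦ.integral_comp Φe.measurableEmbedding (fun ξ => F (R ξ))).symm
  rw [step1, integral_congr_ae (ae_of_all _ key),
    integral_prod_mul (fun x : ℝ => Real.exp ((r - ‖σI‖ ^ 2 / 2) * T) * Real.exp (β0 * x))
      (fun x : ℝ => Real.exp (β1 * x) * (Set.Ici t₀).indicator (fun _ => (1:ℝ)) x),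
    MeasureTheory.integral_const_mul, int_exp, int_exp_ind]
  have hnum : Real.log b + (‖σS‖^2 - ‖σI‖^2)/2*T = (z + β1) * (Real.sqrt T * c) := by
    rw [hlnb, hids, hβ1, hy1]
    field_simp
    ring_nf
    rw [Real.sq_sqrt hT.le]
  have ht0z : t₀ - β1 = z := by
    rw [ht₀, hnum, mul_div_cancel_right₀ _ (by positivity : Real.sqrt T * c ≠ 0)]
    ring
  rw [ht0z, hz]
  have hTss : (Real.sqrt T)^2 = T := Real.sq_sqrt hT.le
  have hconst : Real.exp (-r * T) * (Real.exp ((r - ‖σI‖ ^ 2 / 2) * T) * Real.exp (β0^2/2))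
      * Real.exp (β1^2/2) = 1 := by
    rw [← Real.exp_add, ← Real.exp_add, ← Real.exp_add, ← Real.exp_zero]
    congr 1
    rw [hβ0, hβ1, mul_pow, mul_pow, hTss]
    linear_combination (-(T/2)) * hnormI
  calc Real.exp (-r * T) * ((Real.exp ((r - ‖σI‖ ^ 2 / 2) * T) * Real.exp (β0^2/2)) *
        (Real.exp (β1^2/2) * (δ/2)))
      = (Real.exp (-r * T) * (Real.exp ((r - ‖σI‖ ^ 2 / 2) * T) * Real.exp (β0^2/2))
        * Real.exp (β1^2/2)) * (δ/2) := by ring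
    _ = δ / 2 := by rw [hconst, one_mul]
end

section
/- Let σ_I, σ_S ∈ ℝ², σ_I ≠ σ_S, T > 0, b > 0, r ∈ ℝ, and ξ ~ N(0, I₂). Then e^{−rT} E[ exp((r − ‖σ_I‖²/2)T + √T σ_I·ξ) · 1{ √T(σ_S − σ_I)·ξ ≥ ln b + ((‖σ_S‖² − ‖σ_I‖²)/2)T } ] = F( − ( (‖σ_S − σ_I‖²/2)T + ln b ) / ( ‖σ_S − σ_I‖ √T ) ), where F is the standard normal CDF. -/
open MeasureTheory ProbabilityTheory

open Real
open scoped NNReal ENNReal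

lemma pdf_tilt (a x : ℝ) :
    Real.exp (a * x) * gaussianPDFReal 0 1 x = Real.exp (a ^ 2 / 2) * gaussianPDFReal a 1 x := by
  simp only [gaussianPDFReal, NNReal.coe_one, mul_one]
  rw [mul_left_comm, mul_left_comm (Real.exp (a ^ 2 / 2)), ← Real.exp_add, ← Real.exp_add]
  congr 1
  ring

lemma pdf_conv (v₁ v₂ : ℝ≥0) (h₁ : v₁ ≠ 0) (h₂ : v₂ ≠ 0) (x y : ℝ) :
    gaussianPDFReal 0 v₁ x * gaussianPDFReal 0 v₂ (y - x)
      = gaussianPDFReal 0 (v₁ + v₂) y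
        * gaussianPDFReal (v₁ * y / (v₁ + v₂)) (v₁ * v₂ / (v₁ + v₂)) x := by
  have hv₁ : (0:ℝ) < v₁ := lt_of_le_of_ne v₁.coe_nonneg (by exact_mod_cast h₁.symm)
  have hv₂ : (0:ℝ) < v₂ := lt_of_le_of_ne v₂.coe_nonneg (by exact_mod_cast h₂.symm)
  have hs : (0:ℝ) < (v₁:ℝ) + v₂ := by linarith
  simp only [gaussianPDFReal, NNReal.coe_add, NNReal.coe_div, NNReal.coe_mul]
  rw [mul_mul_mul_comm, mul_mul_mul_comm ((√(2 * π * ((v₁:ℝ) + v₂)))⁻¹)]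
  congr 1
  · rw [← mul_inv, ← mul_inv, ← Real.sqrt_mul (by positivity), ← Real.sqrt_mul (by positivity)]
    congr 1
    field_simp
  · rw [← Real.exp_add, ← Real.exp_add]
    congr 1
    field_simp
    ring

lemma gauss_conv (v₁ v₂ : ℝ≥0) :
    ((gaussianReal 0 v₁).prod (gaussianReal 0 v₂)).map (fun p : ℝ × ℝ => p.1 + p.2)
      = gaussianReal 0 (v₁ + v₂) := by
  by_cases h₁ : v₁ = 0
  · subst h₁
    rw [gaussianReal_zero_var, Measure.dirac_prod,
      Measure.map_map (by fun_prop) (by fun_prop)]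
    have : ((fun p : ℝ × ℝ => p.1 + p.2) ∘ Prod.mk 0) = id := by
      ext y; simp
    rw [this, Measure.map_id, zero_add]
  by_cases h₂ : v₂ = 0
  · subst h₂
    rw [gaussianReal_zero_var, Measure.prod_dirac,
      Measure.map_map (by fun_prop) (by fun_prop)]
    have : ((fun p : ℝ × ℝ => p.1 + p.2) ∘ fun x => (x, (0:ℝ))) = id := by
      ext y; simp
    rw [this, Measure.map_id, add_zero]
  have hsum : v₁ + v₂ ≠ 0 := by simp [h₁, h₂]
  have hw : v₁ * v₂ / (v₁ + v₂) ≠ 0 := by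
    rw [div_ne_zero_iff]
    exact ⟨mul_ne_zero h₁ h₂, hsum⟩
  ext s hs
  rw [Measure.map_apply (by fun_prop) hs,
    Measure.prod_apply (hs.preimage (by fun_prop))]
  set F : ℝ → ℝ≥0∞ := s.indicator 1 with hF
  have hFmeas : Measurable F := measurable_const.indicator hs
  have hFtop : ∀ y, F y ≠ ⊤ := by
    intro y
    by_cases hy : y ∈ s <;> simp [hF, Set.indicator, hy]
  have hpdf_top : ∀ (m : ℝ) (v : ℝ≥0) (x : ℝ), gaussianPDF m v x ≠ ⊤ := fun m v x =>
    ENNReal.ofReal_ne_top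
  have hinner : ∀ x : ℝ,
      (gaussianReal 0 v₂) (Prod.mk x ⁻¹' ((fun p : ℝ × ℝ => p.1 + p.2) ⁻¹' s))
        = ∫⁻ y, F y * gaussianPDF 0 v₂ (y - x) := by
    intro x
    have hset : (Prod.mk x ⁻¹' ((fun p : ℝ × ℝ => p.1 + p.2) ⁻¹' s))
        = (fun y => x + y) ⁻¹' s := rfl
    rw [hset, gaussianReal_apply _ h₂,
      ← lintegral_indicator (hs.preimage (measurable_const_add x)) _,
      ← lintegral_add_right_eq_self (fun z => F z * gaussianPDF 0 v₂ (z - x)) x]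
    congr 1
    ext y
    have : y + x - x = y := by ring
    rw [this]
    by_cases hy : x + y ∈ s
    · have hy' : y + x ∈ s := by rwa [add_comm]
      simp [Set.indicator, hF, hy, hy']
    · have hy' : ¬ (y + x ∈ s) := by rwa [add_comm]
      simp [Set.indicator, hF, hy, hy']
  have hg₂ : Measurable (fun p : ℝ × ℝ => gaussianPDF 0 v₂ (p.2 - p.1)) :=
    (measurable_gaussianPDF 0 v₂).comp (measurable_snd.sub measurable_fst)
  simp_rw [hinner]
  rw [gaussianReal_of_var_ne_zero _ h₁,
    lintegral_withDensity_eq_lintegral_mul _ (measurable_gaussianPDF _ _)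
      (Measurable.lintegral_prod_right' (f := fun p : ℝ × ℝ => F p.2 * gaussianPDF 0 v₂ (p.2 - p.1)) ((hFmeas.comp measurable_snd).mul hg₂))]
  have hswap : ∫⁻ x, (gaussianPDF 0 v₁ * fun x => ∫⁻ y, F y * gaussianPDF 0 v₂ (y - x)) x
      = ∫⁻ x, ∫⁻ y, gaussianPDF 0 v₁ x * (F y * gaussianPDF 0 v₂ (y - x)) := by
    congr 1; ext x
    simp only [Pi.mul_apply]
    rw [← lintegral_const_mul' _ _ (hpdf_top _ _ _)]
  have hbig : Measurable (Function.uncurry fun x y =>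
      gaussianPDF 0 v₁ x * (F y * gaussianPDF 0 v₂ (y - x))) :=
    ((measurable_gaussianPDF 0 v₁).comp measurable_fst).mul
      ((hFmeas.comp measurable_snd).mul hg₂)
  rw [hswap, lintegral_lintegral_swap hbig.aemeasurable]
  have hpt : ∀ y x : ℝ, gaussianPDF 0 v₁ x * (F y * gaussianPDF 0 v₂ (y - x))
      = F y * (gaussianPDF 0 (v₁ + v₂) y * gaussianPDF (v₁ * y / (v₁ + v₂)) (v₁ * v₂ / (v₁ + v₂)) x) := by
    intro y x
    rw [mul_left_comm]
    congr 1
    simp only [gaussianPDF]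
    rw [← ENNReal.ofReal_mul (gaussianPDFReal_nonneg _ _ _),
      ← ENNReal.ofReal_mul (gaussianPDFReal_nonneg _ _ _), pdf_conv v₁ v₂ h₁ h₂ x y]
  simp_rw [hpt]
  have hfin : ∀ y : ℝ, ∫⁻ x, F y * (gaussianPDF 0 (v₁ + v₂) y
        * gaussianPDF (v₁ * y / (v₁ + v₂)) (v₁ * v₂ / (v₁ + v₂)) x)
      = F y * gaussianPDF 0 (v₁ + v₂) y := by
    intro y
    rw [lintegral_const_mul' _ _ (hFtop y), lintegral_const_mul' _ _ (hpdf_top _ _ _),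
      lintegral_gaussianPDF_eq_one _ hw, mul_one]
  simp_rw [hfin]
  rw [gaussianReal_apply _ hsum, ← lintegral_indicator hs _]
  congr 1
  ext y
  by_cases hy : y ∈ s <;> simp [Set.indicator, hF, hy]

lemma tilt (a : ℝ) (f : ℝ → ℝ≥0∞) (hf : Measurable f) :
    ∫⁻ x, ENNReal.ofReal (Real.exp (a * x)) * f x ∂(gaussianReal 0 1)
      = ENNReal.ofReal (Real.exp (a ^ 2 / 2)) * ∫⁻ x, f (x + a) ∂(gaussianReal 0 1) := by
  have hmg : Measurable fun x => ENNReal.ofReal (Real.exp (a * x)) * f x :=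
    ((Real.measurable_exp.comp (measurable_const_mul a)).ennreal_ofReal).mul hf
  rw [gaussianReal_of_var_ne_zero _ one_ne_zero,
    lintegral_withDensity_eq_lintegral_mul _ (measurable_gaussianPDF _ _) hmg]
  have hpt : ∀ x, (gaussianPDF 0 1 * fun x => ENNReal.ofReal (Real.exp (a * x)) * f x) x
      = ENNReal.ofReal (Real.exp (a ^ 2 / 2)) * (gaussianPDF a 1 x * f x) := by
    intro x
    simp only [Pi.mul_apply, gaussianPDF]
    rw [← mul_assoc, ← mul_assoc, ← ENNReal.ofReal_mul (gaussianPDFReal_nonneg _ _ _),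
      ← ENNReal.ofReal_mul (Real.exp_nonneg _), mul_comm (gaussianPDFReal 0 1 x),
      pdf_tilt]
  simp_rw [hpt]
  rw [lintegral_const_mul' _ _ ENNReal.ofReal_ne_top]
  congr 1
  have h2 : ∫⁻ x, gaussianPDF a 1 x * f x
      = ∫⁻ x, f x ∂(volume.withDensity (gaussianPDF a 1)) :=
    (lintegral_withDensity_eq_lintegral_mul _ (measurable_gaussianPDF _ _) hf).symm
  rw [h2, ← gaussianReal_of_var_ne_zero a one_ne_zero,
    ← gaussianReal_of_var_ne_zero 0 one_ne_zero, ← zero_add a,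
    ← gaussianReal_map_add_const a, lintegral_map hf (measurable_add_const a), zero_add]

lemma gauss_Ici (v : ℝ≥0) (hv : v ≠ 0) (t : ℝ) :
    gaussianReal 0 v (Set.Ici t) = gaussianReal 0 1 (Set.Iic (-t / Real.sqrt v)) := by
  have hv' : (0:ℝ) < v := lt_of_le_of_ne v.coe_nonneg (by exact_mod_cast hv.symm)
  have hsq : (0:ℝ) < Real.sqrt v := Real.sqrt_pos.mpr hv'
  have h1 : gaussianReal 0 v = (gaussianReal 0 1).map (fun x => Real.sqrt v * x) := by
    rw [gaussianReal_map_const_mul, mul_zero]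
    congr 1
    ext
    simp [Real.sq_sqrt v.coe_nonneg]
  have hneg : (gaussianReal 0 1).map (fun x : ℝ => -1 * x) = gaussianReal 0 1 := by
    rw [gaussianReal_map_const_mul, mul_zero]
    congr 1
    ext
    norm_num
  rw [h1, Measure.map_apply (measurable_const_mul _) measurableSet_Ici]
  have hpre : (fun x => Real.sqrt v * x) ⁻¹' Set.Ici t = Set.Ici (t / Real.sqrt v) := by
    ext x
    simp only [Set.mem_preimage, Set.mem_Ici]
    rw [div_le_iff₀ hsq, mul_comm]
  rw [hpre]
  conv_rhs => rw [← hneg]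
  rw [Measure.map_apply (measurable_const_mul _) measurableSet_Iic]
  congr 1
  ext x
  simp only [Set.mem_Ici, Set.mem_preimage, Set.mem_Iic, neg_one_mul, neg_div]
  constructor
  · intro h; linarith
  · intro h; linarith

lemma key (a₁ a₂ c₁ c₂ k : ℝ) (hc : c₁ ^ 2 + c₂ ^ 2 ≠ 0) :
    ∫ q : ℝ × ℝ, Real.exp (a₁ * q.1 + a₂ * q.2) *
        (if k ≤ c₁ * q.1 + c₂ * q.2 then (1:ℝ) else 0)
        ∂((gaussianReal 0 1).prod (gaussianReal 0 1))
      = Real.exp ((a₁ ^ 2 + a₂ ^ 2) / 2)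
        * stdNormalCDF ((a₁ * c₁ + a₂ * c₂ - k) / Real.sqrt (c₁ ^ 2 + c₂ ^ 2)) := by
  set γ := gaussianReal 0 1 with hγ
  set μ2 := γ.prod γ with hμ2
  set J : ℝ → ℝ → ℝ≥0∞ := fun x y => if k ≤ c₁ * x + c₂ * y then 1 else 0 with hJ
  have hJm : Measurable (Function.uncurry J) := by
    apply Measurable.ite _ measurable_const measurable_const
    exact measurableSet_le measurable_const (by fun_prop)
  have hJm1 : ∀ x, Measurable (J x) := fun x =>
    hJm.comp (measurable_prodMk_left)
  -- step 0 : Bochner to lintegral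
  have hnn : 0 ≤ᵐ[μ2] fun q : ℝ × ℝ => Real.exp (a₁ * q.1 + a₂ * q.2) *
      (if k ≤ c₁ * q.1 + c₂ * q.2 then (1:ℝ) else 0) := by
    refine ae_of_all _ fun q => ?_
    have : (0:ℝ) ≤ (if k ≤ c₁ * q.1 + c₂ * q.2 then (1:ℝ) else 0) := by positivity
    positivity
  have hmeas : AEStronglyMeasurable (fun q : ℝ × ℝ => Real.exp (a₁ * q.1 + a₂ * q.2) *
      (if k ≤ c₁ * q.1 + c₂ * q.2 then (1:ℝ) else 0)) μ2 := by
    refine Measurable.aestronglyMeasurable ?_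
    refine Measurable.mul (by fun_prop) ?_
    exact Measurable.ite (measurableSet_le measurable_const (by fun_prop))
      measurable_const measurable_const
  rw [integral_eq_lintegral_of_nonneg_ae hnn hmeas]
  -- pointwise rewrite of ofReal
  have h0 : ∀ q : ℝ × ℝ, ENNReal.ofReal (Real.exp (a₁ * q.1 + a₂ * q.2) *
        (if k ≤ c₁ * q.1 + c₂ * q.2 then (1:ℝ) else 0))
      = ENNReal.ofReal (Real.exp (a₁ * q.1)) *
          (ENNReal.ofReal (Real.exp (a₂ * q.2)) * J q.1 q.2) := by
    intro q
    rw [Real.exp_add, mul_assoc, ENNReal.ofReal_mul (Real.exp_nonneg _),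
      ENNReal.ofReal_mul (Real.exp_nonneg _)]
    congr 2
    by_cases h : k ≤ c₁ * q.1 + c₂ * q.2 <;> simp [hJ, h]
  simp_rw [h0]
  -- Fubini
  have hGm : Measurable (fun q : ℝ × ℝ => ENNReal.ofReal (Real.exp (a₁ * q.1)) *
      (ENNReal.ofReal (Real.exp (a₂ * q.2)) * J q.1 q.2)) := by
    refine Measurable.mul (by fun_prop) (Measurable.mul (by fun_prop) hJm)
  rw [MeasureTheory.lintegral_prod _ hGm.aemeasurable]
  -- inner tilt
  have hin : ∀ x : ℝ, ∫⁻ y, ENNReal.ofReal (Real.exp (a₁ * x)) *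
        (ENNReal.ofReal (Real.exp (a₂ * y)) * J x y) ∂γ
      = ENNReal.ofReal (Real.exp (a₂ ^ 2 / 2)) *
          (ENNReal.ofReal (Real.exp (a₁ * x)) * ∫⁻ y, J x (y + a₂) ∂γ) := by
    intro x
    rw [lintegral_const_mul' _ _ ENNReal.ofReal_ne_top, tilt a₂ (J x) (hJm1 x)]
    rw [mul_left_comm]
  simp_rw [hin]
  -- outer tilt
  have hGm2 : Measurable (fun x : ℝ => ∫⁻ y, J x (y + a₂) ∂γ) := by
    refine Measurable.lintegral_prod_right' (f := fun p : ℝ × ℝ => J p.1 (p.2 + a₂)) ?_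
    exact hJm.comp (measurable_fst.prodMk (measurable_snd.add_const a₂))
  rw [lintegral_const_mul' _ _ ENNReal.ofReal_ne_top,
    tilt a₁ (fun x => ∫⁻ y, J x (y + a₂) ∂γ) hGm2]
  -- identify the remaining double integral as a measure
  set k' := k - (a₁ * c₁ + a₂ * c₂) with hk'
  have hJshift : ∀ x y : ℝ, J (x + a₁) (y + a₂)
      = (if k' ≤ c₁ * x + c₂ * y then (1:ℝ≥0∞) else 0) := by
    intro x y
    simp only [hJ, hk']
    refine if_congr ?_ rfl rfl
    constructor <;> intro h <;> nlinarith [h]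
  simp_rw [hJshift]
  have hS' : MeasurableSet {q : ℝ × ℝ | k' ≤ c₁ * q.1 + c₂ * q.2} :=
    measurableSet_le measurable_const (by fun_prop)
  have hdbl : ∫⁻ x, ∫⁻ y, (if k' ≤ c₁ * x + c₂ * y then (1:ℝ≥0∞) else 0) ∂γ ∂γ
      = μ2 {q : ℝ × ℝ | k' ≤ c₁ * q.1 + c₂ * q.2} := by
    have e1 : ∫⁻ q : ℝ × ℝ, (if k' ≤ c₁ * q.1 + c₂ * q.2 then (1:ℝ≥0∞) else 0) ∂μ2
        = ∫⁻ x, ∫⁻ y, (if k' ≤ c₁ * x + c₂ * y then (1:ℝ≥0∞) else 0) ∂γ ∂γ :=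
      MeasureTheory.lintegral_prod _ (Measurable.aemeasurable
        (Measurable.ite hS' measurable_const measurable_const))
    rw [← e1, ← lintegral_indicator_one hS']
    refine lintegral_congr fun q => ?_
    by_cases h : k' ≤ c₁ * q.1 + c₂ * q.2 <;>
      simp [Set.indicator_apply, Set.mem_setOf_eq, h]
  rw [hdbl]
  -- law of the linear combination
  set v : ℝ≥0 := NNReal.mk (c₁ ^ 2 + c₂ ^ 2) (by positivity) with hv
  have hvne : v ≠ 0 := by
    intro h
    apply hc
    have := congrArg (fun x : ℝ≥0 => (x : ℝ)) h
    simpa [hv] using this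
  have hmap : μ2.map (fun q : ℝ × ℝ => c₁ * q.1 + c₂ * q.2) = gaussianReal 0 v := by
    have m1 : MeasurePreserving (fun x : ℝ => c₁ * x) γ
        (gaussianReal 0 (NNReal.mk (c₁ ^ 2) (sq_nonneg _))) :=
      ⟨measurable_const_mul _, by rw [hγ, gaussianReal_map_const_mul, mul_zero, mul_one]⟩
    have m2 : MeasurePreserving (fun x : ℝ => c₂ * x) γ
        (gaussianReal 0 (NNReal.mk (c₂ ^ 2) (sq_nonneg _))) :=
      ⟨measurable_const_mul _, by rw [hγ, gaussianReal_map_const_mul, mul_zero, mul_one]⟩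
    have mp := m1.prod m2
    have hcomp : (fun q : ℝ × ℝ => c₁ * q.1 + c₂ * q.2)
        = (fun p : ℝ × ℝ => p.1 + p.2) ∘ (Prod.map (fun x => c₁ * x) (fun x => c₂ * x)) := rfl
    rw [hcomp, ← Measure.map_map (by fun_prop) (by fun_prop), mp.map_eq, gauss_conv]
    congr 1
  have hmeasS : μ2 {q : ℝ × ℝ | k' ≤ c₁ * q.1 + c₂ * q.2} = gaussianReal 0 v (Set.Ici k') := by
    rw [← hmap, Measure.map_apply (by fun_prop) measurableSet_Ici]
    rfl
  rw [hmeasS, gauss_Ici v hvne k']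
  -- final arithmetic
  have hvcoe : ((v : ℝ≥0) : ℝ) = c₁ ^ 2 + c₂ ^ 2 := rfl
  rw [ENNReal.toReal_mul, ENNReal.toReal_mul, ENNReal.toReal_ofReal (Real.exp_nonneg _),
    ENNReal.toReal_ofReal (Real.exp_nonneg _)]
  rw [← mul_assoc, ← Real.exp_add]
  have harg : -k' / Real.sqrt (v : ℝ)
      = (a₁ * c₁ + a₂ * c₂ - k) / Real.sqrt (c₁ ^ 2 + c₂ ^ 2) := by
    rw [hvcoe, hk']
    ring_nf
  rw [harg]
  congr 1
  · congr 1
    ring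

theorem stmt5 (σI σS : EuclideanSpace ℝ (Fin 2)) (hne : σI ≠ σS)
    (T b r : ℝ) (hT : 0 < T) (hb : 0 < b) :
    Real.exp (-r * T) *
      ∫ ξ, Real.exp ((r - ‖σI‖ ^ 2 / 2) * T + Real.sqrt T * (inner ℝ σI ξ : ℝ)) *
        (if Real.log b + ((‖σS‖ ^ 2 - ‖σI‖ ^ 2) / 2) * T
              ≤ Real.sqrt T * (inner ℝ (σS - σI) ξ : ℝ)
         then (1 : ℝ) else 0) ∂(stdGaussian 2)
      = stdNormalCDF (-(((‖σS - σI‖ ^ 2 / 2) * T + Real.log b) /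
          (‖σS - σI‖ * Real.sqrt T))) := by
  -- notation
  have hnormsq : ∀ x : EuclideanSpace ℝ (Fin 2), ‖x‖ ^ 2 = x 0 ^ 2 + x 1 ^ 2 := by
    intro x
    rw [EuclideanSpace.norm_eq, Real.sq_sqrt (by positivity)]
    simp [Fin.sum_univ_two, sq_abs]
  have hnorm : ∀ x : EuclideanSpace ℝ (Fin 2), ‖x‖ = Real.sqrt (x 0 ^ 2 + x 1 ^ 2) := by
    intro x
    rw [EuclideanSpace.norm_eq]
    simp [Fin.sum_univ_two, sq_abs]
  have hinner : ∀ σ ξ : EuclideanSpace ℝ (Fin 2), (inner ℝ σ ξ : ℝ) = σ 0 * ξ 0 + σ 1 * ξ 1 := by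
    intro σ ξ
    simp [PiLp.inner_apply, Fin.sum_univ_two, RCLike.inner_apply, mul_comm]
  have hsub : ∀ i, (σS - σI) i = σS i - σI i := fun i => rfl
  set s := Real.sqrt T with hs
  have hs2 : s ^ 2 = T := Real.sq_sqrt hT.le
  have hspos : 0 < s := Real.sqrt_pos.mpr hT
  set d0 := σS 0 - σI 0 with hd0
  set d1 := σS 1 - σI 1 with hd1
  set k : ℝ := Real.log b + ((‖σS‖ ^ 2 - ‖σI‖ ^ 2) / 2) * T with hk
  set C : ℝ := (r - ‖σI‖ ^ 2 / 2) * T with hC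
  set a₁ : ℝ := s * σI 0 with ha₁
  set a₂ : ℝ := s * σI 1 with ha₂
  set c₁ : ℝ := s * d0 with hc₁
  set c₂ : ℝ := s * d1 with hc₂
  clear_value s d0 d1 k C a₁ a₂ c₁ c₂
  have hdne : d0 ≠ 0 ∨ d1 ≠ 0 := by
    by_contra h
    push_neg at h
    obtain ⟨h0, h1⟩ := h
    apply hne
    ext i
    have h0' : σI 0 = σS 0 := by
      rw [hd0] at h0
      have := sub_eq_zero.mp h0; linarith
    have h1' : σI 1 = σS 1 := by
      rw [hd1] at h1
      have := sub_eq_zero.mp h1; linarith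
    fin_cases i
    · exact h0'
    · exact h1'
  have hcsum : c₁ ^ 2 + c₂ ^ 2 = T * (d0 ^ 2 + d1 ^ 2) := by
    rw [hc₁, hc₂]
    linear_combination (d0 ^ 2 + d1 ^ 2) * hs2
  have hdsum : 0 < d0 ^ 2 + d1 ^ 2 := by
    rcases hdne with h | h <;> positivity
  have hc : c₁ ^ 2 + c₂ ^ 2 ≠ 0 := by
    rw [hcsum]; positivity
  -- measurability of the integrand
  have hinM : ∀ σ : EuclideanSpace ℝ (Fin 2),
      Measurable fun ξ : EuclideanSpace ℝ (Fin 2) => (inner ℝ σ ξ : ℝ) := by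
    intro σ
    exact (continuous_const.inner continuous_id).measurable
  have hfm : Measurable fun ξ : EuclideanSpace ℝ (Fin 2) =>
      Real.exp (C + s * (inner ℝ σI ξ : ℝ)) *
        (if k ≤ s * (inner ℝ (σS - σI) ξ : ℝ) then (1:ℝ) else 0) := by
    refine Measurable.mul ?_ ?_
    · exact Real.measurable_exp.comp (measurable_const.add (measurable_const.mul (hinM σI)))
    · exact Measurable.ite
        (measurableSet_le measurable_const (measurable_const.mul (hinM (σS - σI))))
        measurable_const measurable_const
  -- reduce to the product measure
  have hmape : Measurable ⇑(EuclideanSpace.equiv (Fin 2) ℝ).symm :=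
    (EuclideanSpace.equiv (Fin 2) ℝ).symm.continuous.measurable
  have hred : ∫ ξ, Real.exp (C + s * (inner ℝ σI ξ : ℝ)) *
        (if k ≤ s * (inner ℝ (σS - σI) ξ : ℝ) then (1:ℝ) else 0) ∂(stdGaussian 2)
      = ∫ q : ℝ × ℝ, Real.exp C * (Real.exp (a₁ * q.1 + a₂ * q.2) *
          (if k ≤ c₁ * q.1 + c₂ * q.2 then (1:ℝ) else 0))
          ∂((gaussianReal 0 1).prod (gaussianReal 0 1)) := by
    rw [_root_.stdGaussian, integral_map hmape.aemeasurable hfm.aestronglyMeasurable]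
    have hpt : ∀ x : Fin 2 → ℝ,
        Real.exp (C + s * (inner ℝ σI ((EuclideanSpace.equiv (Fin 2) ℝ).symm x) : ℝ)) *
          (if k ≤ s * (inner ℝ (σS - σI) ((EuclideanSpace.equiv (Fin 2) ℝ).symm x) : ℝ)
            then (1:ℝ) else 0)
        = Real.exp C * (Real.exp (a₁ * x 0 + a₂ * x 1) *
            (if k ≤ c₁ * x 0 + c₂ * x 1 then (1:ℝ) else 0)) := by
      intro x
      have ecoe : ∀ i : Fin 2, ((EuclideanSpace.equiv (Fin 2) ℝ).symm x) i = x i :=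
        fun i => rfl
      have harg1 : s * (σI 0 * x 0 + σI 1 * x 1) = a₁ * x 0 + a₂ * x 1 := by
        rw [ha₁, ha₂]; ring
      have harg2 : s * ((σS 0 - σI 0) * x 0 + (σS 1 - σI 1) * x 1) = c₁ * x 0 + c₂ * x 1 := by
        rw [hc₁, hc₂, hd0, hd1]; ring
      simp only [hinner, hsub, ecoe]
      rw [Real.exp_add, harg1, harg2, mul_assoc]
    simp_rw [hpt]
    have hpi := (measurePreserving_piFinTwo (fun _ : Fin 2 => gaussianReal 0 1)).integral_comp
      (MeasurableEquiv.measurableEmbedding _)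
      (fun q : ℝ × ℝ => Real.exp C * (Real.exp (a₁ * q.1 + a₂ * q.2) *
        (if k ≤ c₁ * q.1 + c₂ * q.2 then (1:ℝ) else 0)))
    rw [← hpi]
    refine integral_congr_ae (Filter.Eventually.of_forall fun x => ?_)
    simp [MeasurableEquiv.piFinTwo_apply]
  rw [hred, integral_const_mul, key a₁ a₂ c₁ c₂ k hc]
  -- final arithmetic
  have hZ : (a₁ * c₁ + a₂ * c₂ - k) / Real.sqrt (c₁ ^ 2 + c₂ ^ 2)
      = -((‖σS - σI‖ ^ 2 / 2 * T + Real.log b) / (‖σS - σI‖ * s)) := by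
    have hnd : ‖σS - σI‖ = Real.sqrt (d0 ^ 2 + d1 ^ 2) := by
      rw [hnorm (σS - σI), hsub 0, hsub 1, ← hd0, ← hd1]
    have hnd2 : ‖σS - σI‖ ^ 2 = d0 ^ 2 + d1 ^ 2 := by
      rw [hnd, Real.sq_sqrt hdsum.le]
    have hden : Real.sqrt (c₁ ^ 2 + c₂ ^ 2) = ‖σS - σI‖ * s := by
      rw [hcsum, Real.sqrt_mul hT.le, hnd, ← hs, mul_comm]
    have hnum : a₁ * c₁ + a₂ * c₂ - k = -(‖σS - σI‖ ^ 2 / 2 * T + Real.log b) := by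
      rw [hnd2, ha₁, ha₂, hc₁, hc₂, hk, hnormsq σS, hnormsq σI]
      have h0 : σS 0 = σI 0 + d0 := by rw [hd0]; ring
      have h1 : σS 1 = σI 1 + d1 := by rw [hd1]; ring
      rw [h0, h1]
      linear_combination (σI 0 * d0 + σI 1 * d1) * hs2
    rw [hden, hnum, neg_div]
  rw [hZ]
  have hexp : Real.exp (-r * T) * (Real.exp C * Real.exp ((a₁ ^ 2 + a₂ ^ 2) / 2)) = 1 := by
    rw [← Real.exp_add, ← Real.exp_add, ← Real.exp_zero]
    congr 1
    have haa : a₁ ^ 2 + a₂ ^ 2 = T * (σI 0 ^ 2 + σI 1 ^ 2) := by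
      rw [ha₁, ha₂]; linear_combination (σI 0 ^ 2 + σI 1 ^ 2) * hs2
    rw [haa, hC, hnormsq σI]
    ring
  calc Real.exp (-r * T) * (Real.exp C * (Real.exp ((a₁ ^ 2 + a₂ ^ 2) / 2) *
        stdNormalCDF (-((‖σS - σI‖ ^ 2 / 2 * T + Real.log b) / (‖σS - σI‖ * s)))))
      = (Real.exp (-r * T) * (Real.exp C * Real.exp ((a₁ ^ 2 + a₂ ^ 2) / 2))) *
        stdNormalCDF (-((‖σS - σI‖ ^ 2 / 2 * T + Real.log b) / (‖σS - σI‖ * s))) := by ring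
    _ = stdNormalCDF (-((‖σS - σI‖ ^ 2 / 2 * T + Real.log b) / (‖σS - σI‖ * s))) := by
        rw [hexp, one_mul]
end

section
/- Let μ_I, μ_S, r ∈ ℝ, σ_I, σ_S ∈ ℝ^d with σ_I ≠ σ_S, T > 0, δ, ε ∈ (0,1), and ξ ~ N(0, I_d). Define L = (μ_S − μ_I)T + ((‖σ_I‖² − ‖σ_S‖²)/2)T + √T (σ_S − σ_I)·ξ. If μ_S − μ_I + ‖σ_I‖² − σ_S·σ_I ≥ (z_{δ/2} + z_ε)‖σ_S − σ_I‖/√T, then P( |L + (‖σ_S − σ_I‖²/2)T| < z_{δ/2}‖σ_S − σ_I‖√T ) ≤ ε. -/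
open MeasureTheory ProbabilityTheory Real NNReal
set_option maxHeartbeats 1000000

lemma pdf_conv_s6 (v w : ℝ≥0) (hv : v ≠ 0) (hw : w ≠ 0) (x y : ℝ) :
    gaussianPDFReal 0 v x * gaussianPDFReal x w y
      = gaussianPDFReal 0 (v + w) y *
        gaussianPDFReal ((v : ℝ) * y / ((v : ℝ) + w))
          (NNReal.mk ((v : ℝ) * w / ((v : ℝ) + w)) (by positivity)) x := by
  have ha : (0:ℝ) < v := lt_of_le_of_ne v.coe_nonneg (by exact_mod_cast (Ne.symm hv))
  have hb : (0:ℝ) < w := lt_of_le_of_ne w.coe_nonneg (by exact_mod_cast (Ne.symm hw))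
  have hab : (0:ℝ) < (v:ℝ) + w := by positivity
  simp only [gaussianPDFReal, NNReal.coe_add, NNReal.coe_mk]
  rw [mul_mul_mul_comm, mul_mul_mul_comm ((√(2 * π * ((v:ℝ)+w)))⁻¹)]
  congr 1
  · rw [← mul_inv, ← mul_inv, ← Real.sqrt_mul (by positivity), ← Real.sqrt_mul (by positivity)]
    congr 2
    field_simp
  · rw [← Real.exp_add, ← Real.exp_add]
    congr 1
    field_simp
    ring

lemma gaussianReal_conv (v w : ℝ≥0) :
    ((gaussianReal 0 v).prod (gaussianReal 0 w)).map (fun p : ℝ × ℝ => p.1 + p.2)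
      = gaussianReal 0 (v + w) := by
  rcases eq_or_ne v 0 with hv | hv
  · subst hv
    rw [gaussianReal_zero_var, Measure.dirac_prod,
      Measure.map_map (g := fun p : ℝ × ℝ => p.1 + p.2) (measurable_fst.add measurable_snd) measurable_prodMk_left]
    have : ((fun p : ℝ × ℝ => p.1 + p.2) ∘ Prod.mk (0:ℝ)) = (fun y : ℝ => (0:ℝ) + y) := rfl
    rw [this, gaussianReal_map_const_add, add_zero, zero_add]
  rcases eq_or_ne w 0 with hw | hw
  · subst hw
    rw [gaussianReal_zero_var, Measure.prod_dirac,
      Measure.map_map (g := fun p : ℝ × ℝ => p.1 + p.2) (measurable_fst.add measurable_snd) (measurable_id'.prodMk measurable_const)]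
    have : ((fun p : ℝ × ℝ => p.1 + p.2) ∘ (fun x : ℝ => (x, (0:ℝ)))) = (fun x : ℝ => x + (0:ℝ)) := rfl
    rw [this, gaussianReal_map_add_const, add_zero, add_zero]
  have hvw : v + w ≠ 0 := by simp [hv, hw]
  have hmeas2 : Measurable (fun p : ℝ × ℝ => gaussianPDF p.1 w p.2) := by
    have : (fun p : ℝ × ℝ => gaussianPDF p.1 w p.2)
        = fun p : ℝ × ℝ => ENNReal.ofReal (gaussianPDFReal 0 w (p.2 - p.1)) := by
      funext p
      rw [gaussianPDF, gaussianPDFReal_sub, zero_add]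
    rw [this]
    exact ((measurable_gaussianPDFReal 0 w).comp (measurable_snd.sub measurable_fst)).ennreal_ofReal
  ext s hs
  rw [Measure.map_apply (by fun_prop) hs, Measure.prod_apply (hs.preimage (by fun_prop))]
  have h1 : ∀ x : ℝ, (gaussianReal 0 w) (Prod.mk x ⁻¹' ((fun p : ℝ × ℝ => p.1 + p.2) ⁻¹' s))
      = ∫⁻ y in s, gaussianPDF x w y := by
    intro x
    have hpre : (Prod.mk x ⁻¹' ((fun p : ℝ × ℝ => p.1 + p.2) ⁻¹' s)) = (fun y => x + y) ⁻¹' s := rfl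
    rw [hpre, ← Measure.map_apply (by fun_prop) hs, gaussianReal_map_const_add, zero_add,
      gaussianReal_apply _ hw]
  simp_rw [h1]
  have hg : Measurable fun x : ℝ => ∫⁻ y in s, gaussianPDF x w y :=
    Measurable.lintegral_prod_right (f := fun x y => gaussianPDF x w y) hmeas2
  rw [gaussianReal_of_var_ne_zero _ hv,
    lintegral_withDensity_eq_lintegral_mul _ (measurable_gaussianPDF _ _) hg]
  simp only [Pi.mul_apply]
  have hswap : ∫⁻ x : ℝ, gaussianPDF 0 v x * ∫⁻ y in s, gaussianPDF x w y
      = ∫⁻ y in s, ∫⁻ x : ℝ, gaussianPDF 0 v x * gaussianPDF x w y := by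
    have hfun : (fun x : ℝ => gaussianPDF 0 v x * ∫⁻ y in s, gaussianPDF x w y)
        = fun x : ℝ => ∫⁻ y in s, gaussianPDF 0 v x * gaussianPDF x w y := by
      funext x
      exact (lintegral_const_mul (gaussianPDF 0 v x)
        (hmeas2.comp measurable_prodMk_left)).symm
    rw [hfun]
    exact lintegral_lintegral_swap
      (((measurable_gaussianPDF 0 v).comp measurable_fst).mul hmeas2).aemeasurable
  rw [hswap]
  have hinner : ∀ y : ℝ, ∫⁻ x : ℝ, gaussianPDF 0 v x * gaussianPDF x w y
      = gaussianPDF 0 (v + w) y := by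
    intro y
    have : ∀ x : ℝ, gaussianPDF 0 v x * gaussianPDF x w y
        = gaussianPDF 0 (v + w) y *
          gaussianPDF ((v : ℝ) * y / ((v : ℝ) + w))
            (NNReal.mk ((v : ℝ) * w / ((v : ℝ) + w)) (by positivity)) x := by
      intro x
      simp only [gaussianPDF, ← ENNReal.ofReal_mul (gaussianPDFReal_nonneg _ _ _)]
      rw [pdf_conv_s6 v w hv hw x y]
    rw [lintegral_congr this]
    rw [lintegral_const_mul _ (measurable_gaussianPDF _ _), lintegral_gaussianPDF_eq_one, mul_one]
    · intro hcontra
      have ha : (0:ℝ) < v := lt_of_le_of_ne v.coe_nonneg (by exact_mod_cast (Ne.symm hv))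
      have hb : (0:ℝ) < w := lt_of_le_of_ne w.coe_nonneg (by exact_mod_cast (Ne.symm hw))
      have : ((v : ℝ) * w / ((v : ℝ) + w)) = 0 := congrArg NNReal.toReal hcontra
      have hpos : (0:ℝ) < (v : ℝ) * w / ((v : ℝ) + w) := by positivity
      linarith
  simp_rw [hinner]
  rw [gaussianReal_apply _ hvw]

lemma map_sum_pi (n : ℕ) (a : Fin n → ℝ) :
    (Measure.pi fun _ : Fin n => gaussianReal 0 1).map (fun x => ∑ i, a i * x i)
      = gaussianReal 0 (∑ i, (NNReal.mk ((a i)^2) (sq_nonneg _) : ℝ≥0)) := by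
  induction n with
  | zero =>
    have h0 : (fun x : Fin 0 → ℝ => ∑ i, a i * x i) = fun _ => (0:ℝ) := by
      funext x; simp
    rw [h0, Measure.map_const, measure_univ, one_smul]
    simp
  | succ n ih =>
    have hmp := measurePreserving_piFinSuccAbove (fun _ : Fin (n+1) => gaussianReal 0 1) 0
    set e := MeasurableEquiv.piFinSuccAbove (fun _ : Fin (n+1) => ℝ) 0 with he
    have hpi : (Measure.pi fun _ : Fin (n+1) => gaussianReal 0 1)
        = ((gaussianReal 0 1).prod (Measure.pi fun _ : Fin n => gaussianReal 0 1)).map e.symm := by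
      rw [← hmp.map_eq, MeasurableEquiv.map_symm_map]
    rw [hpi, Measure.map_map (by fun_prop) e.symm.measurable]
    have hcomp : ((fun x : Fin (n+1) → ℝ => ∑ i, a i * x i) ∘ e.symm)
        = (fun q : ℝ × ℝ => q.1 + q.2) ∘
            (Prod.map (fun y => a 0 * y) (fun x : Fin n → ℝ => ∑ i, a i.succ * x i)) := by
      funext p
      simp only [Function.comp_apply, he, MeasurableEquiv.piFinSuccAbove_symm_apply,
        Fin.sum_univ_succ, Prod.map_apply]
      obtain ⟨y, x⟩ := p
      simp only [Fin.insertNthEquiv, Equiv.coe_fn_mk, Fin.insertNth_apply_same, Prod.map_apply]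
      congr 1
    rw [hcomp, ← Measure.map_map (g := fun q : ℝ × ℝ => q.1 + q.2) (measurable_fst.add measurable_snd) (by fun_prop),
      ← Measure.map_prod_map _ _ (by fun_prop) (by fun_prop), ih,
      gaussianReal_map_const_mul, mul_zero, gaussianReal_conv]
    congr 1
    rw [Fin.sum_univ_succ, mul_one]

lemma stdGaussian_inner_law {d : ℕ} (a : EuclideanSpace ℝ (Fin d)) (c : ℝ) :
    stdGaussian d {ξ | (inner ℝ a ξ : ℝ) ≤ c}
      = gaussianReal 0 (NNReal.mk (‖a‖^2) (sq_nonneg _) : ℝ≥0) (Set.Iic c) := by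
  have hinner : ∀ x : Fin d → ℝ,
      (inner ℝ a ((EuclideanSpace.equiv (Fin d) ℝ).symm x) : ℝ) = ∑ i, a i * x i := by
    intro x
    rw [PiLp.inner_apply]
    exact Finset.sum_congr rfl fun i _ => by simp [RCLike.inner_apply, mul_comm]
  have hfm : Measurable fun ξ : EuclideanSpace ℝ (Fin d) => (inner ℝ a ξ : ℝ) :=
    (continuous_const.inner continuous_id).measurable
  have hset : MeasurableSet {ξ : EuclideanSpace ℝ (Fin d) | (inner ℝ a ξ : ℝ) ≤ c} :=
    measurableSet_le hfm measurable_const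
  rw [_root_.stdGaussian, Measure.map_apply
    (EuclideanSpace.equiv (Fin d) ℝ).symm.continuous.measurable hset]
  have hpre : ((EuclideanSpace.equiv (Fin d) ℝ).symm ⁻¹'
      {ξ : EuclideanSpace ℝ (Fin d) | (inner ℝ a ξ : ℝ) ≤ c})
      = (fun x : Fin d → ℝ => ∑ i, a i * x i) ⁻¹' (Set.Iic c) := by
    ext x
    simp only [Set.mem_preimage, Set.mem_setOf_eq, Set.mem_Iic, hinner x]
  have hVeq : (∑ i, (NNReal.mk ((a i)^2) (sq_nonneg _) : ℝ≥0)) = (NNReal.mk (‖a‖^2) (sq_nonneg _) : ℝ≥0) := by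
    refine NNReal.coe_injective ?_
    rw [NNReal.coe_sum, NNReal.coe_mk, EuclideanSpace.norm_eq, Real.sq_sqrt (by positivity)]
    refine Finset.sum_congr rfl fun i _ => ?_
    rw [NNReal.coe_mk, Real.norm_eq_abs, sq_abs]
  rw [hpre, ← Measure.map_apply (by fun_prop) measurableSet_Iic,
    map_sum_pi d (fun i => a i), hVeq]

lemma gaussianReal_Iic_neg (V : ℝ≥0) (c : ℝ) :
    gaussianReal 0 V (Set.Iic (-c)) = gaussianReal 0 V (Set.Ici c) := by
  have hneg : (gaussianReal 0 V).map (fun x : ℝ => (-1 : ℝ) * x) = gaussianReal 0 V := by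
    rw [gaussianReal_map_const_mul]
    have h1 : (NNReal.mk ((-1:ℝ)^2) (sq_nonneg _) : ℝ≥0) = 1 := by
      refine NNReal.coe_injective ?_; norm_num
    rw [h1, one_mul, mul_zero]
  conv_rhs => rw [← hneg]
  rw [Measure.map_apply (by fun_prop) measurableSet_Ici]
  congr 1
  ext x
  simp [le_neg]

theorem stmt6 {d : ℕ} (μI μS r T δ ε : ℝ) (hT : 0 < T)
    (hδ : δ ∈ Set.Ioo (0 : ℝ) 1) (hε : ε ∈ Set.Ioo (0 : ℝ) 1)
    (σI σS : EuclideanSpace ℝ (Fin d)) (hne : σI ≠ σS)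
    (zδ2 zε : ℝ)
    -- zδ2 = z_{δ/2} and zε = z_ε, the upper quantiles of N(0,1)
    (hz1 : ((gaussianReal 0 1) (Set.Ici zδ2)).toReal = δ / 2)
    (hz2 : ((gaussianReal 0 1) (Set.Ici zε)).toReal = ε)
    (h : μS - μI + ‖σI‖ ^ 2 - (inner ℝ σS σI : ℝ)
        ≥ (zδ2 + zε) * ‖σS - σI‖ / Real.sqrt T) :
    ((stdGaussian d) {ξ |
        |((μS - μI) * T + ((‖σI‖ ^ 2 - ‖σS‖ ^ 2) / 2) * T
            + Real.sqrt T * (inner ℝ (σS - σI) ξ : ℝ))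
          + (‖σS - σI‖ ^ 2 / 2) * T|
        < zδ2 * ‖σS - σI‖ * Real.sqrt T}).toReal ≤ ε := by
  set a : EuclideanSpace ℝ (Fin d) := σS - σI with ha'
  have hane : a ≠ 0 := sub_ne_zero.mpr hne.symm
  have hna : 0 < ‖a‖ := norm_pos_iff.mpr hane
  have hsT : 0 < Real.sqrt T := Real.sqrt_pos.mpr hT
  have hTeq : Real.sqrt T * Real.sqrt T = T := Real.mul_self_sqrt hT.le
  -- the inclusion
  have hsub : {ξ : EuclideanSpace ℝ (Fin d) |
        |((μS - μI) * T + ((‖σI‖ ^ 2 - ‖σS‖ ^ 2) / 2) * T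
            + Real.sqrt T * (inner ℝ a ξ : ℝ))
          + (‖a‖ ^ 2 / 2) * T|
        < zδ2 * ‖a‖ * Real.sqrt T}
      ⊆ {ξ : EuclideanSpace ℝ (Fin d) | (inner ℝ a ξ : ℝ) ≤ -(zε * ‖a‖)} := by
    intro ξ hξ
    simp only [Set.mem_setOf_eq] at hξ ⊢
    have h2 := (abs_lt.mp hξ).2
    have hnorm : ‖a‖ ^ 2 = ‖σS‖ ^ 2 - 2 * (inner ℝ σS σI : ℝ) + ‖σI‖ ^ 2 := by
      rw [ha']
      exact norm_sub_sq_real σS σI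
    have hK : (μS - μI) * T + ((‖σI‖ ^ 2 - ‖σS‖ ^ 2) / 2) * T + (‖a‖ ^ 2 / 2) * T
        = T * (μS - μI + ‖σI‖ ^ 2 - (inner ℝ σS σI : ℝ)) := by
      rw [hnorm]; ring
    have hKge : (μS - μI) * T + ((‖σI‖ ^ 2 - ‖σS‖ ^ 2) / 2) * T + (‖a‖ ^ 2 / 2) * T
        ≥ Real.sqrt T * ((zδ2 + zε) * ‖a‖) := by
      rw [hK]
      have := mul_le_mul_of_nonneg_left h hT.le
      calc Real.sqrt T * ((zδ2 + zε) * ‖a‖)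
          = T * ((zδ2 + zε) * ‖a‖ / Real.sqrt T) := by
            have hd : T * ((zδ2 + zε) * ‖a‖ / Real.sqrt T)
                = (zδ2 + zε) * ‖a‖ * (T / Real.sqrt T) := by ring
            rw [hd, Real.div_sqrt]
            ring
        _ ≤ T * (μS - μI + ‖σI‖ ^ 2 - (inner ℝ σS σI : ℝ)) := this
    have h3 : Real.sqrt T * (inner ℝ a ξ : ℝ) < Real.sqrt T * (-(zε * ‖a‖)) := by nlinarith
    exact le_of_lt ((mul_lt_mul_iff_right₀ hsT).mp h3)
  calc ((stdGaussian d) _).toReal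
      ≤ ((stdGaussian d) {ξ : EuclideanSpace ℝ (Fin d) |
          (inner ℝ a ξ : ℝ) ≤ -(zε * ‖a‖)}).toReal := by
        refine ENNReal.toReal_mono ?_ (measure_mono hsub)
        rw [stdGaussian_inner_law]
        exact measure_ne_top _ _
    _ = ε := by
        rw [stdGaussian_inner_law, gaussianReal_Iic_neg]
        set V : ℝ≥0 := NNReal.mk (‖a‖^2) (sq_nonneg _) with hV
        have hscale : (gaussianReal 0 1).map (fun x : ℝ => ‖a‖ * x) = gaussianReal 0 V := by
          rw [gaussianReal_map_const_mul, mul_zero, mul_one]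
        rw [← hscale, Measure.map_apply (by fun_prop) measurableSet_Ici]
        have : (fun x : ℝ => ‖a‖ * x) ⁻¹' (Set.Ici (zε * ‖a‖)) = Set.Ici zε := by
          ext x
          simp only [Set.mem_preimage, Set.mem_Ici]
          rw [mul_comm zε ‖a‖]
          exact mul_le_mul_iff_right₀ hna
        rw [this, hz2]
end

section
/- Let μ_I, μ_S, r ∈ ℝ, σ_I, σ_S ∈ ℝ^d with σ_I ≠ σ_S, T > 0, δ, ε ∈ (0,1), and ξ ~ N(0, I_d). Define L = (μ_S − μ_I)T + ((‖σ_I‖² − ‖σ_S‖²)/2)T + √T (σ_S − σ_I)·ξ. If μ_S − μ_I + ‖σ_I‖² − σ_S·σ_I ≤ −(z_{δ/2} + z_ε)‖σ_S − σ_I‖/√T, then P( |L + (‖σ_S − σ_I‖²/2)T| < z_{δ/2}‖σ_S − σ_I‖√T ) ≤ ε. -/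
open MeasureTheory ProbabilityTheory

open ENNReal Set

theorem aux_lintegral_pi_prod {n : ℕ} {μ : Measure ℝ} [SigmaFinite μ]
    (f : Fin n → ℝ → ℝ≥0∞) (hf : ∀ i, Measurable (f i)) :
    ∫⁻ x : Fin n → ℝ, ∏ i, f i (x i) ∂(Measure.pi fun _ => μ) = ∏ i, ∫⁻ x, f i x ∂μ := by
  induction n with
  | zero => simp
  | succ n ih =>
    rw [← ((measurePreserving_piFinSuccAbove (fun _ : Fin (n+1) => μ) 0).symm).lintegral_comp
      (by fun_prop)]
    simp_rw [MeasurableEquiv.piFinSuccAbove_symm_apply, Fin.insertNthEquiv,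
      Fin.prod_univ_succ, Fin.insertNth_zero, Equiv.coe_fn_mk, Fin.cons_zero, Fin.cons_succ]
    simp only [cast_eq]
    rw [lintegral_prod_mul (hf 0).aemeasurable
      (Measurable.aemeasurable
        (by fun_prop : Measurable fun y : Fin n → ℝ => ∏ i : Fin n, f i.succ (y i))),
      ih (fun i => f i.succ) (fun i => hf i.succ)]

theorem aux_pi_gaussian_eq (d : ℕ) :
    (Measure.pi fun _ : Fin d => gaussianReal 0 1)
      = (volume : Measure (Fin d → ℝ)).withDensity
          (fun x => ∏ i, gaussianPDF 0 1 (x i)) := by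
  refine Measure.pi_eq fun s hs => ?_
  rw [withDensity_apply _ (MeasurableSet.univ_pi hs),
    ← lintegral_indicator (MeasurableSet.univ_pi hs)]
  have hind : ∀ x : Fin d → ℝ,
      (univ.pi s).indicator (fun x => ∏ i, gaussianPDF 0 1 (x i)) x
        = ∏ i, (s i).indicator (gaussianPDF 0 1) (x i) := by
    intro x
    by_cases hx : x ∈ univ.pi s
    · rw [indicator_of_mem hx]
      exact Finset.prod_congr rfl fun i _ => (indicator_of_mem (hx i (mem_univ i)) _).symm
    · rw [indicator_of_notMem hx]
      rw [Set.mem_univ_pi] at hx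
      push_neg at hx
      obtain ⟨i, hi⟩ := hx
      exact (Finset.prod_eq_zero (Finset.mem_univ i)
        (indicator_of_notMem hi _)).symm
  simp_rw [hind]
  rw [volume_pi, aux_lintegral_pi_prod _
    (fun i => (measurable_gaussianPDF 0 1).indicator (hs i))]
  refine Finset.prod_congr rfl fun i _ => ?_
  rw [lintegral_indicator (hs i), ← withDensity_apply _ (hs i),
    ← gaussianReal_of_var_ne_zero 0 one_ne_zero]

theorem aux_map_withDensity {α β : Type*} [MeasurableSpace α] [MeasurableSpace β]
    {g : α → β} (hg : Measurable g) (μ : Measure α) (f : β → ℝ≥0∞) (hf : Measurable f) :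
    (μ.withDensity (fun x => f (g x))).map g = (μ.map g).withDensity f := by
  ext s hs
  rw [Measure.map_apply hg hs, withDensity_apply _ hs,
    withDensity_apply _ (hg hs), setLIntegral_map hs hf hg]

/-- The density of the standard Gaussian. -/
noncomputable def gaussDen (d : ℕ) (x : EuclideanSpace ℝ (Fin d)) : ℝ≥0∞ :=
  ENNReal.ofReal ((Real.sqrt (2 * Real.pi))⁻¹ ^ d * Real.exp (-‖x‖ ^ 2 / 2))

theorem gaussDen_measurable (d : ℕ) : Measurable (gaussDen d) := by
  unfold gaussDen; fun_prop

theorem aux_stdGaussian_eq (d : ℕ) :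
    stdGaussian d
      = (volume : Measure (EuclideanSpace ℝ (Fin d))).withDensity (gaussDen d) := by
  have hfun : ⇑(EuclideanSpace.equiv (Fin d) ℝ).symm
      = ⇑(MeasurableEquiv.toLp 2 (Fin d → ℝ)).symm.symm := rfl
  have hden : ∀ x : Fin d → ℝ,
      (∏ i, gaussianPDF 0 1 (x i))
        = gaussDen d ((MeasurableEquiv.toLp 2 (Fin d → ℝ)).symm.symm x) := by
    intro x
    have hcoord : ∀ i, ((MeasurableEquiv.toLp 2 (Fin d → ℝ)).symm.symm x) i = x i :=
      fun i => rfl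
    have hnorm : ‖(MeasurableEquiv.toLp 2 (Fin d → ℝ)).symm.symm x‖ ^ 2
        = ∑ i, (x i) ^ 2 := by
      rw [EuclideanSpace.norm_eq, Real.sq_sqrt (Finset.sum_nonneg fun i _ => sq_nonneg _)]
      simp_rw [hcoord, Real.norm_eq_abs, sq_abs]
    unfold gaussDen gaussianPDF gaussianPDFReal
    simp only [NNReal.coe_one, mul_one, sub_zero]
    rw [← ENNReal.ofReal_prod_of_nonneg (fun i _ => by positivity)]
    congr 1
    rw [hnorm, Finset.prod_mul_distrib, Finset.prod_const, ← Real.exp_sum,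
      Finset.card_univ, Fintype.card_fin]
    congr 1
    rw [← Finset.sum_div, Finset.sum_neg_distrib, neg_div]
  unfold _root_.stdGaussian
  rw [hfun, aux_pi_gaussian_eq d]
  have h2 := aux_map_withDensity (MeasurableEquiv.toLp 2 (Fin d → ℝ)).symm.symm.measurable
    (volume : Measure (Fin d → ℝ)) (gaussDen d) (gaussDen_measurable d)
  simp_rw [← hden] at h2
  rw [h2, MeasurePreserving.map_eq
    (MeasurePreserving.symm _ (EuclideanSpace.volume_preserving_symm_measurableEquiv_toLp (Fin d)))]

theorem aux_stdGaussian_map_isometry {d : ℕ}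
    (e : EuclideanSpace ℝ (Fin d) ≃ₗᵢ[ℝ] EuclideanSpace ℝ (Fin d)) :
    (stdGaussian d).map e = stdGaussian d := by
  rw [aux_stdGaussian_eq d]
  have hden : (fun x => gaussDen d (e x)) = gaussDen d := by
    funext x
    unfold gaussDen
    rw [e.norm_map]
  have h3 := aux_map_withDensity e.continuous.measurable
    (volume : Measure (EuclideanSpace ℝ (Fin d))) (gaussDen d) (gaussDen_measurable d)
  rw [hden] at h3
  rw [h3, e.measurePreserving.map_eq]

theorem aux_pi_map_eval {d : ℕ} (i : Fin d) :
    (Measure.pi fun _ : Fin d => gaussianReal 0 1).map (Function.eval i)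
      = gaussianReal 0 1 := by
  ext s hs
  rw [Measure.map_apply (measurable_pi_apply i) hs]
  change (Measure.pi fun _ : Fin d => gaussianReal 0 1) (Function.eval i ⁻¹' s) = _
  rw [← Set.univ_pi_update_univ, Measure.pi_pi]
  refine (Finset.prod_eq_single_of_mem i (Finset.mem_univ i) (fun j _ hj => ?_)).trans ?_
  · rw [Function.update_of_ne hj]; simp
  · rw [Function.update_self]

theorem aux_stdGaussian_map_eval {d : ℕ} (i : Fin d) :
    (stdGaussian d).map (fun ξ : EuclideanSpace ℝ (Fin d) => ξ i) = gaussianReal 0 1 := by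
  unfold _root_.stdGaussian
  rw [Measure.map_map (by fun_prop : Measurable fun ξ : EuclideanSpace ℝ (Fin d) => ξ i)
    (by exact (MeasurableEquiv.toLp 2 (Fin d → ℝ)).symm.symm.measurable :
      Measurable ⇑(EuclideanSpace.equiv (Fin d) ℝ).symm)]
  exact aux_pi_map_eval i

theorem aux_stdGaussian_map_inner {d : ℕ} (v : EuclideanSpace ℝ (Fin d)) (hv : v ≠ 0) :
    (stdGaussian d).map (fun ξ => (inner ℝ v ξ : ℝ))
      = gaussianReal 0 ⟨‖v‖ ^ 2, sq_nonneg _⟩ := by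
  have hd : 0 < d := by
    rcases Nat.eq_zero_or_pos d with h0 | h0
    · subst h0; exact absurd (Subsingleton.elim v 0) hv
    · exact h0
  set i₀ : Fin d := ⟨0, hd⟩
  have hvn : ‖v‖ ≠ 0 := norm_ne_zero_iff.mpr hv
  set u : EuclideanSpace ℝ (Fin d) := ‖v‖⁻¹ • v with hu_def
  have hu : ‖u‖ = 1 := by
    rw [hu_def, norm_smul, norm_inv, norm_norm, inv_mul_cancel₀ hvn]
  have horth : Orthonormal ℝ (({i₀} : Set (Fin d)).restrict (fun _ => u)) := by
    rw [orthonormal_iff_ite]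
    intro i j
    have hij : i = j := Subsingleton.elim i j
    subst hij
    rw [if_pos rfl]
    show (inner ℝ u u : ℝ) = 1
    rw [real_inner_self_eq_norm_sq, hu]; norm_num
  obtain ⟨b, hb⟩ := horth.exists_orthonormalBasis_extension_of_card_eq
    (by simp [finrank_euclideanSpace_fin])
  have hbu : b i₀ = u := hb i₀ rfl
  have key : (fun ξ : EuclideanSpace ℝ (Fin d) => (inner ℝ v ξ : ℝ))
      = (fun y : EuclideanSpace ℝ (Fin d) => ‖v‖ * y i₀) ∘ ⇑b.repr := by
    funext ξ
    simp only [Function.comp_apply]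
    rw [b.repr_apply_apply, hbu, hu_def, real_inner_smul_left]
    field_simp
  rw [key, ← Measure.map_map
    (by fun_prop :
      Measurable fun y : EuclideanSpace ℝ (Fin d) => ‖v‖ * y i₀)
    b.repr.continuous.measurable,
    aux_stdGaussian_map_isometry b.repr]
  have hcomp : (fun y : EuclideanSpace ℝ (Fin d) => ‖v‖ * y i₀)
      = (fun t : ℝ => ‖v‖ * t) ∘ (fun y : EuclideanSpace ℝ (Fin d) => y i₀) := rfl
  rw [hcomp, ← Measure.map_map (by fun_prop : Measurable fun t : ℝ => ‖v‖ * t)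
    (by fun_prop : Measurable fun y : EuclideanSpace ℝ (Fin d) => y i₀),
    aux_stdGaussian_map_eval i₀, gaussianReal_map_const_mul ‖v‖]
  simp
  rfl

theorem stmt7 {d : ℕ} (μI μS r T δ ε : ℝ) (hT : 0 < T)
    (hδ : δ ∈ Set.Ioo (0 : ℝ) 1) (hε : ε ∈ Set.Ioo (0 : ℝ) 1)
    (σI σS : EuclideanSpace ℝ (Fin d)) (hne : σI ≠ σS)
    (zδ2 zε : ℝ)
    (hz1 : ((gaussianReal 0 1) (Set.Ici zδ2)).toReal = δ / 2)
    (hz2 : ((gaussianReal 0 1) (Set.Ici zε)).toReal = ε)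
    (h : μS - μI + ‖σI‖ ^ 2 - (inner ℝ σS σI : ℝ)
        ≤ -((zδ2 + zε) * ‖σS - σI‖ / Real.sqrt T)) :
    ((stdGaussian d) {ξ |
        |((μS - μI) * T + ((‖σI‖ ^ 2 - ‖σS‖ ^ 2) / 2) * T
            + Real.sqrt T * (inner ℝ (σS - σI) ξ : ℝ))
          + (‖σS - σI‖ ^ 2 / 2) * T|
        < zδ2 * ‖σS - σI‖ * Real.sqrt T}).toReal ≤ ε := by
  set v := σS - σI with hv_def
  have hv : v ≠ 0 := sub_ne_zero.mpr (Ne.symm hne)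
  have hc : 0 < ‖v‖ := norm_pos_iff.mpr hv
  have hsT : 0 < Real.sqrt T := Real.sqrt_pos.mpr hT
  set m : ℝ := (μS - μI) * T + ((‖σI‖ ^ 2 - ‖σS‖ ^ 2) / 2) * T + (‖v‖ ^ 2 / 2) * T with hm_def
  have hm : m ≤ -((zδ2 + zε) * ‖v‖ * Real.sqrt T) := by
    have hnorm : ‖v‖ ^ 2 = ‖σS‖ ^ 2 - 2 * (inner ℝ σS σI : ℝ) + ‖σI‖ ^ 2 := by
      rw [hv_def, @norm_sub_sq_real]
    have hmT : m = T * (μS - μI + ‖σI‖ ^ 2 - (inner ℝ σS σI : ℝ)) := by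
      rw [hm_def, hnorm]; ring
    rw [hmT]
    calc T * (μS - μI + ‖σI‖ ^ 2 - (inner ℝ σS σI : ℝ))
        ≤ T * (-((zδ2 + zε) * ‖v‖ / Real.sqrt T)) :=
          mul_le_mul_of_nonneg_left h hT.le
      _ = -(T / Real.sqrt T * ((zδ2 + zε) * ‖v‖)) := by ring
      _ = -((zδ2 + zε) * ‖v‖ * Real.sqrt T) := by rw [Real.div_sqrt]; ring
  have hsub : {ξ : EuclideanSpace ℝ (Fin d) |
        |((μS - μI) * T + ((‖σI‖ ^ 2 - ‖σS‖ ^ 2) / 2) * T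
            + Real.sqrt T * (inner ℝ v ξ : ℝ))
          + (‖v‖ ^ 2 / 2) * T|
        < zδ2 * ‖v‖ * Real.sqrt T}
      ⊆ {ξ : EuclideanSpace ℝ (Fin d) | zε * ‖v‖ < (inner ℝ v ξ : ℝ)} := by
    intro ξ hξ
    simp only [Set.mem_setOf_eq] at hξ ⊢
    have h1 : -(zδ2 * ‖v‖ * Real.sqrt T) < m + Real.sqrt T * (inner ℝ v ξ : ℝ) := by
      have h1' := neg_lt_of_abs_lt hξ
      have : ((μS - μI) * T + ((‖σI‖ ^ 2 - ‖σS‖ ^ 2) / 2) * T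
            + Real.sqrt T * (inner ℝ v ξ : ℝ)) + (‖v‖ ^ 2 / 2) * T
          = m + Real.sqrt T * (inner ℝ v ξ : ℝ) := by rw [hm_def]; ring
      linarith [this ▸ h1']
    have h2 : Real.sqrt T * (zε * ‖v‖) < Real.sqrt T * (inner ℝ v ξ : ℝ) := by nlinarith
    exact (mul_lt_mul_iff_right₀ hsT).mp h2
  have hXm : Measurable (fun ξ : EuclideanSpace ℝ (Fin d) => (inner ℝ v ξ : ℝ)) :=
    (continuous_const.inner continuous_id).measurable
  have hmap := aux_stdGaussian_map_inner v hv
  have hmeas : (stdGaussian d) {ξ : EuclideanSpace ℝ (Fin d) | zε * ‖v‖ < (inner ℝ v ξ : ℝ)}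
      = gaussianReal 0 ⟨‖v‖ ^ 2, sq_nonneg _⟩ (Set.Ioi (zε * ‖v‖)) := by
    rw [← hmap, Measure.map_apply hXm measurableSet_Ioi]
    rfl
  have htail : (gaussianReal 0 ⟨‖v‖ ^ 2, sq_nonneg _⟩ (Set.Ioi (zε * ‖v‖))).toReal = ε := by
    have hmapc : gaussianReal 0 ⟨‖v‖ ^ 2, sq_nonneg _⟩
        = (gaussianReal 0 1).map (‖v‖ * ·) := by
      rw [gaussianReal_map_const_mul ‖v‖]
      simp
      rfl
    rw [hmapc, Measure.map_apply (by fun_prop : Measurable fun x : ℝ => ‖v‖ * x)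
      measurableSet_Ioi]
    have hpre : (‖v‖ * ·) ⁻¹' (Set.Ioi (zε * ‖v‖)) = Set.Ioi zε := by
      ext x
      simp only [Set.mem_preimage, Set.mem_Ioi]
      rw [mul_comm zε ‖v‖]
      exact mul_lt_mul_iff_right₀ hc
    have hsing : gaussianReal 0 1 {zε} = 0 :=
      gaussianReal_absolutelyContinuous 0 one_ne_zero (measure_singleton zε)
    rw [hpre, ← hz2,
      show Set.Ioi zε = Set.Ici zε \ {zε} from Set.Ici_sdiff_left.symm,
      measure_diff_null hsing]
  have hle : (stdGaussian d) {ξ : EuclideanSpace ℝ (Fin d) |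
        |((μS - μI) * T + ((‖σI‖ ^ 2 - ‖σS‖ ^ 2) / 2) * T
            + Real.sqrt T * (inner ℝ v ξ : ℝ))
          + (‖v‖ ^ 2 / 2) * T|
        < zδ2 * ‖v‖ * Real.sqrt T}
      ≤ gaussianReal 0 ⟨‖v‖ ^ 2, sq_nonneg _⟩ (Set.Ioi (zε * ‖v‖)) :=
    hmeas ▸ measure_mono hsub
  exact le_trans (ENNReal.toReal_mono (by have := instIsProbabilityMeasureGaussianReal 0 ⟨‖v‖ ^ 2, sq_nonneg ‖v‖⟩; exact measure_ne_top _ _) hle) (le_of_eq htail)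
end

section
/- Suppose that for constants C > 0, T > 0, real numbers μ_S, μ_I, r and vectors σ_S, σ_I ∈ ℝ^d with σ_I ≠ 0 we have |μ_I − r − ‖σ_I‖²| < C‖σ_I‖/√T and |μ_S − r − σ_S·σ_I| < C(‖σ_I‖ + ‖σ_S − σ_I‖)/√T. Then |μ_S − r − (σ_S·σ_I/‖σ_I‖²)(μ_I − r)| ≤ C(‖σ_I‖ + ‖σ_S‖ + ‖σ_S − σ_I‖)/√T. -/
theorem stmt10 {d : ℕ} (μS μI r C T : ℝ) (hC : 0 < C) (hT : 0 < T)
    (σS σI : EuclideanSpace ℝ (Fin d)) (hσI : σI ≠ 0)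
    (h1 : |μI - r - ‖σI‖ ^ 2| < C * ‖σI‖ / Real.sqrt T)
    (h2 : |μS - r - (inner ℝ σS σI : ℝ)| < C * (‖σI‖ + ‖σS - σI‖) / Real.sqrt T) :
    |μS - r - ((inner ℝ σS σI : ℝ) / ‖σI‖ ^ 2) * (μI - r)|
      ≤ C * (‖σI‖ + ‖σS‖ + ‖σS - σI‖) / Real.sqrt T := by
  have hI : (0:ℝ) < ‖σI‖ := norm_pos_iff.mpr hσI
  have hI2 : (0:ℝ) < ‖σI‖ ^ 2 := by positivity
  set β : ℝ := (inner ℝ σS σI : ℝ) / ‖σI‖ ^ 2 with hβ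
  have key : μS - r - β * (μI - r)
      = (μS - r - (inner ℝ σS σI : ℝ)) - β * (μI - r - ‖σI‖ ^ 2) := by
    rw [hβ]; field_simp
    ring
  have hcs : |(inner ℝ σS σI : ℝ)| ≤ ‖σS‖ * ‖σI‖ := abs_real_inner_le_norm σS σI
  have hβb : |β| * ‖σI‖ ≤ ‖σS‖ := by
    rw [hβ, abs_div, abs_of_pos hI2]
    rw [div_mul_eq_mul_div, div_le_iff₀ hI2]
    calc |(inner ℝ σS σI : ℝ)| * ‖σI‖ ≤ ‖σS‖ * ‖σI‖ * ‖σI‖ := by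
          exact mul_le_mul_of_nonneg_right hcs (norm_nonneg _)
      _ = ‖σS‖ * ‖σI‖ ^ 2 := by ring
  have hsT : 0 < Real.sqrt T := Real.sqrt_pos.mpr hT
  calc |μS - r - β * (μI - r)|
      ≤ |μS - r - (inner ℝ σS σI : ℝ)| + |β| * |μI - r - ‖σI‖ ^ 2| := by
        rw [key]; exact (abs_sub _ _).trans (by rw [abs_mul])
    _ ≤ C * (‖σI‖ + ‖σS - σI‖) / Real.sqrt T + |β| * (C * ‖σI‖ / Real.sqrt T) := by
        gcongr
    _ ≤ C * (‖σI‖ + ‖σS - σI‖) / Real.sqrt T + C * ‖σS‖ / Real.sqrt T := by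
        gcongr _ + ?_
        have hb : |β| * (C * ‖σI‖) ≤ C * ‖σS‖ := by
          calc |β| * (C * ‖σI‖) = C * (|β| * ‖σI‖) := by ring
            _ ≤ C * ‖σS‖ := by gcongr
        calc |β| * (C * ‖σI‖ / Real.sqrt T) = |β| * (C * ‖σI‖) / Real.sqrt T := by ring
          _ ≤ C * ‖σS‖ / Real.sqrt T := by gcongr
    _ = C * (‖σI‖ + ‖σS‖ + ‖σS - σI‖) / Real.sqrt T := by ring
end
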